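/- Fix s ≥ 0, and let μ be a Borel probability measure on ℝ³ with the following property: there are parameters η > 0 and δ₀ > 0 such that for all 0 < δ ≤ δ₀, the set Z_δ of points z ∈ ℝ³ satisfying H¹({θ ∈ [0, 2π) : μ({z′ ∈ ℝ³ : |π_θ(z) − π_θ(z′)| ≤ δ}) ≥ δ^s}) ≥ δ^η has measure μ(Z_δ) ≤ δ^η. Then dim_H π_θ(spt μ) ≥ s for Lebesgue-almost every θ ∈ [0, 2π). -/

import Mathlib

open MeasureTheory Metric Real
open Filter Topology ENNReal NNReal

/-- `ℝ³` as a Euclidean space. -/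
noncomputable abbrev E3 := EuclideanSpace ℝ (Fin 3)

/-- The vector `(a, b, c) ∈ ℝ³`. -/
noncomputable def vec3 (a b c : ℝ) : E3 := (WithLp.equiv 2 (Fin 3 → ℝ)).symm ![a, b, c]

/-- The unit vector `γ(θ) = (cos θ, sin θ, 1)/√2`. -/
noncomputable def gam (θ : ℝ) : E3 := (Real.sqrt 2)⁻¹ • vec3 (Real.cos θ) (Real.sin θ) 1

/-- The orthogonal projection `π_θ` of `ℝ³` onto the plane `γ(θ)^⊥`,
viewed as a map `ℝ³ → ℝ³`. -/
noncomputable def projθ (θ : ℝ) (z : E3) : E3 := (Submodule.orthogonalProjectionOnto (ℝ ∙ gam θ)ᗮ z : E3)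

/-- The (closed) support of a measure `μ`: the set of points all of whose neighbourhoods
have positive measure. -/
def sptMeasure (μ : Measure E3) : Set E3 := {z | ∀ r : ℝ, 0 < r → 0 < μ (ball z r)}

lemma gam_norm (θ : ℝ) : ‖gam θ‖ = 1 := by
  have h2 : ‖vec3 (Real.cos θ) (Real.sin θ) 1‖ = Real.sqrt 2 := by
    rw [EuclideanSpace.norm_eq]
    congr 1
    simp [vec3, Fin.sum_univ_three, sq_abs]
    nlinarith [Real.sin_sq_add_cos_sq θ]
  rw [gam, norm_smul, h2]
  have : (0:ℝ) < Real.sqrt 2 := by positivity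
  rw [norm_inv, Real.norm_eq_abs, abs_of_pos this]
  field_simp

lemma projθ_eq (θ : ℝ) (z : E3) :
    projθ θ z = z - (inner ℝ (gam θ) z : ℝ) • gam θ := by
  rw [projθ]
  change (ℝ ∙ gam θ)ᗮ.starProjection z = _
  rw [Submodule.starProjection_orthogonal_val, Submodule.starProjection_singleton, gam_norm]
  norm_num

lemma continuous_gam : Continuous gam := by
  show Continuous ((Real.sqrt 2)⁻¹ • fun θ => vec3 (Real.cos θ) (Real.sin θ) 1)
  apply Continuous.const_smul
  unfold vec3
  refine Continuous.comp ?_ ?_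
  · exact PiLp.continuous_toLp 2 (fun _ : Fin 3 => ℝ)
  · refine continuous_pi fun i => ?_
    fin_cases i <;> simp <;> continuity

lemma continuous_projθ : Continuous fun p : ℝ × E3 => projθ p.1 p.2 := by
  simp only [projθ_eq]
  have hg : Continuous fun p : ℝ × E3 => gam p.1 := continuous_gam.comp continuous_fst
  exact continuous_snd.sub ((hg.inner (𝕜 := ℝ) continuous_snd).smul hg)

lemma projθ_sub (θ : ℝ) (z z' : E3) :
    projθ θ z - projθ θ z' = projθ θ (z - z') := by
  simp only [projθ_eq, inner_sub_right]
  rw [sub_smul]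
  abel

lemma projθ_norm_le (θ : ℝ) (z : E3) : ‖projθ θ z‖ ≤ ‖z‖ := by
  rw [projθ_eq]
  set t : ℝ := inner ℝ (gam θ) z with ht
  have h1 : ‖z - t • gam θ‖ ^ 2 = ‖z‖ ^ 2 - t ^ 2 := by
    rw [@norm_sub_sq_real]
    rw [norm_smul, real_inner_smul_right]
    rw [gam_norm]
    have : (inner ℝ z (gam θ) : ℝ) = t := real_inner_comm _ _
    rw [this]
    simp [abs_of_nonneg, sq_abs]
    ring
  nlinarith [norm_nonneg (z - t • gam θ), norm_nonneg z, sq_nonneg t]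

lemma projθ_lip (θ : ℝ) (z z' : E3) : ‖projθ θ z - projθ θ z'‖ ≤ ‖z - z'‖ := by
  rw [projθ_sub]; exact projθ_norm_le θ _

lemma measurable_slab (μ : Measure E3) [SFinite μ] (δ : ℝ) :
    Measurable fun p : ℝ × E3 => μ {z' : E3 | ‖projθ p.1 p.2 - projθ p.1 z'‖ ≤ δ} := by
  have hs : MeasurableSet {q : (ℝ × E3) × E3 | ‖projθ q.1.1 q.1.2 - projθ q.1.1 q.2‖ ≤ δ} := by
    have hc : Continuous fun q : (ℝ × E3) × E3 => ‖projθ q.1.1 q.1.2 - projθ q.1.1 q.2‖ := by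
      apply Continuous.norm
      exact (continuous_projθ.comp (continuous_fst.fst.prodMk continuous_fst.snd)).sub
        (continuous_projθ.comp (continuous_fst.fst.prodMk continuous_snd))
    exact measurableSet_le hc.measurable measurable_const
  exact measurable_measure_prodMk_left (ν := μ) hs

lemma sptMeasure_closed (μ : Measure E3) : IsClosed (sptMeasure μ) := by
  rw [← isOpen_compl_iff, Metric.isOpen_iff]
  intro z hz
  simp only [sptMeasure, Set.mem_compl_iff, Set.mem_setOf_eq, not_forall] at hz
  obtain ⟨r, hr, hr2⟩ := hz
  have hr0 : μ (ball z r) = 0 := by simpa using hr2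
  refine ⟨r / 2, by positivity, fun z' hz' => ?_⟩
  simp only [sptMeasure, Set.mem_compl_iff, Set.mem_setOf_eq, not_forall]
  refine ⟨r / 2, by positivity, ?_⟩
  have hsub : ball z' (r / 2) ⊆ ball z r := by
    intro w hw
    have := dist_triangle w z' z
    simp only [mem_ball] at hz' hw ⊢
    linarith
  simp [le_antisymm (hr0 ▸ measure_mono hsub) zero_le]

lemma spt_compl_null (μ : Measure E3) : μ (sptMeasure μ)ᶜ = 0 := by
  have hmem : ∀ z : E3, z ∈ (sptMeasure μ)ᶜ → ∃ r : ℝ, 0 < r ∧ μ (ball z r) = 0 := by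
    intro z hz
    simp only [sptMeasure, Set.mem_compl_iff, Set.mem_setOf_eq, not_forall] at hz
    obtain ⟨r, hr, hr2⟩ := hz
    exact ⟨r, hr, by simpa using hr2⟩
  classical
  set ι := ↥((sptMeasure μ)ᶜ)
  have hch : ∀ i : ι, ∃ r : ℝ, 0 < r ∧ μ (ball (i : E3) r) = 0 := fun i => hmem i i.2
  choose r hr hr0 using hch
  obtain ⟨t, htc, ht⟩ := TopologicalSpace.isOpen_iUnion_countable
    (fun i : ι => ball (i : E3) (r i)) (fun i => isOpen_ball)
  have hsub : (sptMeasure μ)ᶜ ⊆ ⋃ i ∈ t, ball (i : E3) (r i) := by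
    rw [ht]
    intro z hz
    exact Set.mem_iUnion.2 ⟨⟨z, hz⟩, mem_ball_self (hr _)⟩
  refine le_antisymm (le_trans (measure_mono hsub) ?_) zero_le
  rw [(measure_biUnion_null_iff htc).2 fun i _ => hr0 i]

lemma tendsto_aux (a s : ℝ) (hs : 0 < s) :
    Filter.Tendsto (fun m : ℕ => ENNReal.ofReal ((a * (2:ℝ)⁻¹ ^ m) ^ s))
      Filter.atTop (𝓝 0) := by
  have h1 : Filter.Tendsto (fun m : ℕ => a * (2:ℝ)⁻¹ ^ m) Filter.atTop (𝓝 0) := by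
    have := tendsto_pow_atTop_nhds_zero_of_lt_one (by norm_num : (0:ℝ) ≤ 2⁻¹)
      (by norm_num : (2:ℝ)⁻¹ < 1)
    simpa using this.const_mul a
  have h2 : Filter.Tendsto (fun m : ℕ => (a * (2:ℝ)⁻¹ ^ m) ^ s) Filter.atTop (𝓝 0) := by
    have hc : ContinuousAt (fun x : ℝ => x ^ s) 0 :=
      Real.continuousAt_rpow_const 0 s (Or.inr hs.le)
    have := hc.tendsto.comp h1
    simpa [Real.zero_rpow hs.ne', Function.comp_def] using this
  have := (ENNReal.continuous_ofReal.tendsto 0).comp h2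
  simpa [Function.comp_def] using this

lemma continuous_projθ_fixed (θ : ℝ) : Continuous (projθ θ) := by
  have h : (projθ θ) = fun z => z - (inner ℝ (gam θ) z : ℝ) • gam θ := funext (projθ_eq θ)
  rw [h]
  exact continuous_id.sub ((Continuous.inner (𝕜 := ℝ) continuous_const continuous_id).smul continuous_const)

set_option maxHeartbeats 1000000 in
lemma key_theta (s : ℝ) (hs : 0 < s) (μ : Measure E3) [IsProbabilityMeasure μ]
    (c : ℝ) (hc : 0 < c) (θ : ℝ)
    (hae : ∀ᵐ z ∂μ, ∀ᶠ k in Filter.atTop,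
      μ {z' : E3 | ‖projθ θ z - projθ θ z'‖ ≤ c * (2:ℝ)⁻¹ ^ k}
        ≤ ENNReal.ofReal ((c * (2:ℝ)⁻¹ ^ k) ^ s)) :
    ENNReal.ofReal s ≤ dimH (projθ θ '' sptMeasure μ) := by
  classical
  set δseq : ℕ → ℝ := fun k => c * (2:ℝ)⁻¹ ^ k with hδseq
  have hδpos : ∀ k, 0 < δseq k := fun k => by positivity
  have hδanti : ∀ a b : ℕ, a ≤ b → δseq b ≤ δseq a := fun a b hab =>
    mul_le_mul_of_nonneg_left
      (pow_le_pow_of_le_one (by norm_num) (by norm_num) hab) hc.le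
  have hδhalf : ∀ k, δseq (k + 1) * 2 = δseq k := fun k => by
    simp only [hδseq, pow_succ]; ring
  -- the projection is measurable
  have hπc : Continuous (projθ θ) := continuous_projθ_fixed θ
  have hπ : Measurable (projθ θ) := hπc.measurable
  -- measurability of slab measures
  have hmz : ∀ δ : ℝ, Measurable fun z : E3 =>
      μ {z' : E3 | ‖projθ θ z - projθ θ z'‖ ≤ δ} := by
    intro δ
    have h1 : Measurable fun z : E3 => ((θ, z) : ℝ × E3) :=
      measurable_const.prodMk measurable_id
    have h2 := (measurable_slab μ δ).comp h1
    simp only [Function.comp_def] at h2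
    exact h2
  -- good sets
  set G : ℕ → Set E3 := fun K => {z | ∀ k, K ≤ k →
    μ {z' : E3 | ‖projθ θ z - projθ θ z'‖ ≤ δseq k} ≤ ENNReal.ofReal ((δseq k) ^ s)}
    with hG
  have hGmeas : ∀ K, MeasurableSet (G K) := by
    intro K
    have : G K = ⋂ k, {z : E3 | K ≤ k →
        μ {z' : E3 | ‖projθ θ z - projθ θ z'‖ ≤ δseq k} ≤ ENNReal.ofReal ((δseq k) ^ s)} := by
      ext z; simp [hG, Set.mem_iInter]
    rw [this]
    refine MeasurableSet.iInter fun k => ?_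
    by_cases hk : K ≤ k
    · simp only [hk, forall_true_left]
      exact measurableSet_le (hmz (δseq k)) measurable_const
    · simp only [hk, false_implies]
      exact MeasurableSet.univ
  -- a.e. point is in some good set
  have haeG : ∀ᵐ z ∂μ, z ∈ (⋃ K, G K) ∩ sptMeasure μ := by
    have h1 : ∀ᵐ z ∂μ, z ∈ sptMeasure μ := by
      have := spt_compl_null μ
      rw [← MeasureTheory.compl_mem_ae_iff] at this
      simpa using this
    filter_upwards [hae, h1] with z hz hz1
    rw [Filter.eventually_atTop] at hz
    obtain ⟨N, hN⟩ := hz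
    exact ⟨Set.mem_iUnion.2 ⟨N, fun k hk => hN k hk⟩, hz1⟩
  -- choose a good set with positive measure
  have hexK : ∃ K, μ (G K ∩ sptMeasure μ) ≠ 0 := by
    by_contra hcon
    push_neg at hcon
    have h0 : μ (⋃ K, G K ∩ sptMeasure μ) = 0 :=
      measure_iUnion_null fun K => hcon K
    have h1 : μ ((⋃ K, G K) ∩ sptMeasure μ) = 0 := by
      rw [Set.iUnion_inter]; exact h0
    have h2 : μ (((⋃ K, G K) ∩ sptMeasure μ)ᶜ) = 0 := by
      have := haeG
      rw [MeasureTheory.ae_iff] at this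
      exact this
    have := measure_union_le (μ := μ) ((⋃ K, G K) ∩ sptMeasure μ)
      (((⋃ K, G K) ∩ sptMeasure μ)ᶜ)
    rw [Set.union_compl_self, h1, h2] at this
    simp [measure_univ] at this
  obtain ⟨K, hK⟩ := hexK
  set S : Set E3 := G K ∩ sptMeasure μ with hSdef
  have hSmeas : MeasurableSet S := (hGmeas K).inter (sptMeasure_closed μ).measurableSet
  set ν : Measure E3 := Measure.map (projθ θ) (μ.restrict S) with hν
  -- finding a good scale
  have exk : ∀ x : ℝ, 0 < x → x ≤ δseq K → ∃ k, K ≤ k ∧ δseq (k + 1) < x ∧ x ≤ δseq k := by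
    intro x hx hxK
    have hex : ∃ j, δseq j < x := by
      have ht : Filter.Tendsto δseq Filter.atTop (𝓝 0) := by
        have := tendsto_pow_atTop_nhds_zero_of_lt_one (by norm_num : (0:ℝ) ≤ 2⁻¹)
          (by norm_num : (2:ℝ)⁻¹ < 1)
        simpa [hδseq] using this.const_mul c
      exact (ht.eventually (gt_mem_nhds hx)).exists
    have hKlt : K < Nat.find hex := by
      by_contra hcon
      push_neg at hcon
      exact absurd (lt_of_le_of_lt hxK (lt_of_le_of_lt (hδanti _ _ hcon) (Nat.find_spec hex)))
        (lt_irrefl x)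
    refine ⟨Nat.find hex - 1, by omega, ?_, ?_⟩
    · have h1 : Nat.find hex - 1 + 1 = Nat.find hex := by omega
      rw [h1]; exact Nat.find_spec hex
    · have := Nat.find_min hex (m := Nat.find hex - 1) (by omega)
      push_neg at this
      exact this
  -- restrict measure of S
  have hrest : (μ.restrict S) S = μ S := by
    rw [Measure.restrict_apply hSmeas]; simp
  -- key ball estimate
  have hball : ∀ x : E3, ∀ rr : ℝ, 0 < rr → 2 * rr ≤ δseq K →
      ν (closedBall x rr) ≤ ENNReal.ofReal ((4 * rr) ^ s) := by
    intro x rr hrr h2rr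
    rw [hν, Measure.map_apply hπ measurableSet_closedBall,
      Measure.restrict_apply (hπ measurableSet_closedBall)]
    rcases Set.eq_empty_or_nonempty (projθ θ ⁻¹' closedBall x rr ∩ S) with hemp | ⟨z, hz1, hz2⟩
    · rw [hemp]; simp
    · obtain ⟨k, hkK, hk1, hk2⟩ := exk (2 * rr) (by positivity) h2rr
      have hsub : projθ θ ⁻¹' closedBall x rr ∩ S ⊆
          {z' : E3 | ‖projθ θ z - projθ θ z'‖ ≤ δseq k} := by
        rintro z' ⟨hz1', _⟩
        simp only [Set.mem_preimage, mem_closedBall] at hz1 hz1'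
        simp only [Set.mem_setOf_eq]
        have htri : ‖projθ θ z - projθ θ z'‖ ≤ dist (projθ θ z) x + dist x (projθ θ z') := by
          rw [← dist_eq_norm]
          exact dist_triangle _ _ _
        have h1 : dist x (projθ θ z') ≤ rr := by rw [dist_comm]; exact hz1'
        linarith
      calc μ _ ≤ μ {z' : E3 | ‖projθ θ z - projθ θ z'‖ ≤ δseq k} := measure_mono hsub
        _ ≤ ENNReal.ofReal ((δseq k) ^ s) := hz2.1 k hkK
        _ ≤ ENNReal.ofReal ((4 * rr) ^ s) := by
            apply ENNReal.ofReal_le_ofReal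
            apply Real.rpow_le_rpow (hδpos k).le _ hs.le
            have := hδhalf k
            nlinarith
  -- singletons are null for ν
  have hsing : ∀ x : E3, ν {x} = 0 := by
    intro x
    have hle : ∀ m : ℕ, ν {x} ≤ ENNReal.ofReal ((2 * δseq (K + m)) ^ s) := by
      intro m
      have hrr : (0:ℝ) < δseq (K + m) / 2 := by have := hδpos (K + m); positivity
      have h2rr : 2 * (δseq (K + m) / 2) ≤ δseq K := by
        have := hδanti K (K + m) (Nat.le_add_right _ _); linarith
      have hb := hball x (δseq (K + m) / 2) hrr h2rr
      have h4 : 4 * (δseq (K + m) / 2) = 2 * δseq (K + m) := by ring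
      rw [h4] at hb
      refine le_trans (measure_mono ?_) hb
      intro y hy
      simp only [Set.mem_singleton_iff] at hy
      simp [hy, mem_closedBall, hrr.le]
    have ht : Filter.Tendsto (fun m : ℕ => ENNReal.ofReal ((2 * δseq (K + m)) ^ s))
        Filter.atTop (𝓝 0) := by
      have heq : (fun m : ℕ => ENNReal.ofReal ((2 * δseq (K + m)) ^ s))
          = fun m : ℕ => ENNReal.ofReal (((2 * c * (2:ℝ)⁻¹ ^ K) * (2:ℝ)⁻¹ ^ m) ^ s) := by
        funext m
        congr 1
        rw [hδseq]
        simp [pow_add]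
        ring_nf
      rw [heq]
      exact tendsto_aux _ s hs
    exact le_antisymm (ge_of_tendsto ht (Filter.Eventually.of_forall hle)) zero_le
  -- the dimension bound
  refine ENNReal.le_of_forall_nnreal_lt ?_
  intro p hp
  have hps : (p : ℝ) < s := by
    rw [← ENNReal.ofReal_coe_nnreal] at hp
    exact (ENNReal.ofReal_lt_ofReal_iff hs).mp hp
  set A : ℝ := (2 * δseq K) ^ (s - (p:ℝ)) * 4 ^ (p:ℝ) with hA
  have hApos : 0 < A :=
    mul_pos (Real.rpow_pos_of_pos (by have := hδpos K; linarith) _)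
      (Real.rpow_pos_of_pos (by norm_num) _)
  set ν' : Measure E3 := (ENNReal.ofReal A)⁻¹ • ν with hν'
  have hC0 : ENNReal.ofReal A ≠ 0 := (ENNReal.ofReal_pos.mpr hApos).ne'
  have hCt : ENNReal.ofReal A ≠ ⊤ := ENNReal.ofReal_ne_top
  have hν'le : ν' ≤ μH[(p:ℝ)] := by
    refine Measure.le_hausdorffMeasure _ _ (ENNReal.ofReal (δseq K / 2))
      (ENNReal.ofReal_pos.mpr (by have := hδpos K; positivity)) ?_
    intro t ht
    rcases Set.eq_empty_or_nonempty t with rfl | ⟨x, hx⟩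
    · simp
    have hdne : ediam t ≠ ⊤ := ne_top_of_le_ne_top ENNReal.ofReal_ne_top ht
    rcases eq_or_lt_of_le ((zero_le : 0 ≤ ediam t)) with hd0 | hdpos
    · -- diameter zero
      have hsub : t ⊆ {x} := by
        intro y hy
        have h1 := EMetric.edist_le_diam_of_mem hy hx
        rw [← hd0, le_zero_iff] at h1
        simp [edist_eq_zero.mp h1]
      have hx0 : ν' {x} = 0 := by
        rw [hν', Measure.smul_apply, smul_eq_mul, hsing x, mul_zero]
      have h2 : ν' t = 0 :=
        le_antisymm (le_trans (measure_mono hsub) (le_of_eq hx0)) zero_le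
      rw [h2]; exact zero_le
    · -- positive diameter
      set rr : ℝ := (ediam t).toReal with hrr
      have hrrpos : 0 < rr := ENNReal.toReal_pos hdpos.ne' hdne
      have hrrle : rr ≤ δseq K / 2 := by
        rw [hrr]
        exact ENNReal.toReal_le_of_le_ofReal (by have := hδpos K; positivity) ht
      have hsubt : t ⊆ closedBall x rr := by
        intro y hy
        rw [mem_closedBall]
        have h1 := EMetric.edist_le_diam_of_mem hy hx
        rw [← ENNReal.ofReal_toReal hdne, edist_dist] at h1
        exact (ENNReal.ofReal_le_ofReal_iff hrrpos.le).mp h1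
      have hb := hball x rr hrrpos (by linarith)
      have hkey : ν t ≤ ENNReal.ofReal A * (ediam t) ^ (p:ℝ) := by
        refine le_trans (le_trans (measure_mono hsubt) hb) ?_
        have h1 : (4 * rr) ^ s ≤ A * rr ^ (p:ℝ) := by
          have e1 : (4 * rr) ^ s = (4 * rr) ^ (s - (p:ℝ)) * (4 * rr) ^ (p:ℝ) := by
            rw [← Real.rpow_add (by positivity)]
            ring_nf
          have e2 : (4 * rr) ^ (s - (p:ℝ)) ≤ (2 * δseq K) ^ (s - (p:ℝ)) :=
            Real.rpow_le_rpow (by positivity) (by linarith) (by linarith)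
          have e3 : (4 * rr) ^ (p:ℝ) = 4 ^ (p:ℝ) * rr ^ (p:ℝ) :=
            Real.mul_rpow (by norm_num) hrrpos.le
          have e4 : (0:ℝ) ≤ (4 * rr) ^ (p:ℝ) := Real.rpow_nonneg (by positivity) _
          have e5 : (0:ℝ) ≤ rr ^ (p:ℝ) := Real.rpow_nonneg hrrpos.le _
          have e6 : (0:ℝ) < 4 ^ (p:ℝ) := Real.rpow_pos_of_pos (by norm_num) _
          rw [e1, hA, e3]
          nlinarith
        calc ENNReal.ofReal ((4 * rr) ^ s)
            ≤ ENNReal.ofReal (A * rr ^ (p:ℝ)) := ENNReal.ofReal_le_ofReal h1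
          _ = ENNReal.ofReal A * ENNReal.ofReal (rr ^ (p:ℝ)) := ENNReal.ofReal_mul hApos.le
          _ = ENNReal.ofReal A * (ediam t) ^ (p:ℝ) := by
              rw [← ENNReal.ofReal_rpow_of_pos hrrpos, ENNReal.ofReal_toReal hdne]
      rw [hν', Measure.smul_apply, smul_eq_mul]
      calc (ENNReal.ofReal A)⁻¹ * ν t
          ≤ (ENNReal.ofReal A)⁻¹ * (ENNReal.ofReal A * (ediam t) ^ (p:ℝ)) :=
            mul_le_mul_right hkey _
        _ = (ediam t) ^ (p:ℝ) := by
            rw [← mul_assoc, ENNReal.inv_mul_cancel hC0 hCt, one_mul]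
  -- put things together
  have hEν : (ENNReal.ofReal A)⁻¹ * μ S ≤ μH[(p:ℝ)] (projθ θ '' S) := by
    have h1 : μ S ≤ ν (projθ θ '' S) := by
      have h2 := Measure.le_map_apply_image (μ := μ.restrict S) hπ.aemeasurable S
      rwa [hrest] at h2
    calc (ENNReal.ofReal A)⁻¹ * μ S
        ≤ (ENNReal.ofReal A)⁻¹ * ν (projθ θ '' S) := mul_le_mul_right h1 _
      _ = ν' (projθ θ '' S) := by rw [hν', Measure.smul_apply, smul_eq_mul]
      _ ≤ μH[(p:ℝ)] (projθ θ '' S) := Measure.le_iff'.mp hν'le _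
  have hne : μH[(p:ℝ)] (projθ θ '' S) ≠ 0 := by
    intro h0
    rw [h0] at hEν
    have h1 : (ENNReal.ofReal A)⁻¹ * μ S = 0 := le_antisymm hEν zero_le
    rcases mul_eq_zero.mp h1 with h2 | h2
    · exact (ENNReal.inv_ne_zero.mpr hCt) h2
    · exact hK h2
  have hdim : (p : ℝ≥0∞) ≤ dimH (projθ θ '' S) :=
    le_dimH_of_hausdorffMeasure_ne_zero hne
  exact le_trans hdim (dimH_mono (Set.image_mono Set.inter_subset_right))

lemma prod_bound (s η : ℝ) (μ : Measure E3) [IsProbabilityMeasure μ] (δ : ℝ)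
    (hZ : μ {z : E3 | ENNReal.ofReal (δ ^ η) ≤
            volume {θ ∈ Set.Ico (0 : ℝ) (2 * π) |
              ENNReal.ofReal (δ ^ s) ≤ μ {z' : E3 | ‖projθ θ z - projθ θ z'‖ ≤ δ}}}
        ≤ ENNReal.ofReal (δ ^ η)) :
    ((volume.restrict (Set.Ico (0:ℝ) (2*π))).prod μ)
      {p : ℝ × E3 | ENNReal.ofReal (δ ^ s) ≤ μ {z' : E3 | ‖projθ p.1 p.2 - projθ p.1 z'‖ ≤ δ}}
      ≤ (ENNReal.ofReal (2*π) + 1) * ENNReal.ofReal (δ ^ η) := by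
  set volR := volume.restrict (Set.Ico (0:ℝ) (2*π)) with hvolR
  set A := {p : ℝ × E3 |
    ENNReal.ofReal (δ ^ s) ≤ μ {z' : E3 | ‖projθ p.1 p.2 - projθ p.1 z'‖ ≤ δ}} with hA
  have hAm : MeasurableSet A := measurableSet_le measurable_const (measurable_slab μ δ)
  set B : Set (E3 × ℝ) := Prod.swap ⁻¹' A with hB
  have hBm : MeasurableSet B := hAm.preimage measurable_swap
  have hswap : (volR.prod μ) A = (μ.prod volR) B := by
    rw [← Measure.prod_swap, Measure.map_apply measurable_swap hAm]
  rw [hswap, Measure.prod_apply hBm]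
  have hsliceMeas : ∀ z : E3, MeasurableSet (Prod.mk z ⁻¹' B) :=
    fun z => hBm.preimage measurable_prodMk_left
  set f : E3 → ℝ≥0∞ := fun z => volR (Prod.mk z ⁻¹' B) with hf
  have hfm : Measurable f := measurable_measure_prodMk_left (ν := volR) hBm
  have hfeq : ∀ z : E3, volume {θ ∈ Set.Ico (0 : ℝ) (2 * π) |
      ENNReal.ofReal (δ ^ s) ≤ μ {z' : E3 | ‖projθ θ z - projθ θ z'‖ ≤ δ}} = f z := by
    intro z
    rw [hf]
    show _ = volR (Prod.mk z ⁻¹' B)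
    rw [hvolR, Measure.restrict_apply (hsliceMeas z)]
    congr 1
    ext θ
    simp only [hB, hA, Set.mem_preimage, Set.mem_setOf_eq, Set.mem_inter_iff, Prod.swap_prod_mk]
    tauto
  set Z := {z : E3 | ENNReal.ofReal (δ ^ η) ≤
      volume {θ ∈ Set.Ico (0 : ℝ) (2 * π) |
        ENNReal.ofReal (δ ^ s) ≤ μ {z' : E3 | ‖projθ θ z - projθ θ z'‖ ≤ δ}}} with hZdef
  have hZm : MeasurableSet Z := by
    have hZeq : Z = {z : E3 | ENNReal.ofReal (δ ^ η) ≤ f z} := by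
      ext z
      simp only [hZdef, Set.mem_setOf_eq, hfeq z]
    rw [hZeq]
    exact measurableSet_le measurable_const hfm
  have hb1 : ∀ z, f z ≤ Z.indicator (fun _ => ENNReal.ofReal (2*π)) z + ENNReal.ofReal (δ ^ η) := by
    intro z
    by_cases hz : z ∈ Z
    · have h2 : f z ≤ ENNReal.ofReal (2*π) := by
        calc f z ≤ volR Set.univ := measure_mono (Set.subset_univ _)
          _ = volume (Set.Ico (0:ℝ) (2*π)) := by
              rw [hvolR, Measure.restrict_apply_univ]
          _ ≤ ENNReal.ofReal (2*π) := by
              rw [Real.volume_Ico]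
              exact ENNReal.ofReal_le_ofReal (by linarith)
      rw [Set.indicator_of_mem hz]
      exact le_trans h2 le_self_add
    · rw [Set.indicator_of_notMem hz, zero_add]
      have h3 : ¬ ENNReal.ofReal (δ ^ η) ≤ f z := by
        rw [← hfeq z]
        exact hz
      exact (lt_of_not_ge h3).le
  calc ∫⁻ z, volR (Prod.mk z ⁻¹' B) ∂μ
      ≤ ∫⁻ z, (Z.indicator (fun _ => ENNReal.ofReal (2*π)) z + ENNReal.ofReal (δ ^ η)) ∂μ :=
        lintegral_mono hb1
    _ = ENNReal.ofReal (2*π) * μ Z + ENNReal.ofReal (δ ^ η) := by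
        rw [lintegral_add_right _ measurable_const, lintegral_indicator_const hZm,
          lintegral_const, measure_univ, mul_one]
    _ ≤ ENNReal.ofReal (2*π) * ENNReal.ofReal (δ ^ η) + ENNReal.ofReal (δ ^ η) := by
        exact add_le_add_left (mul_le_mul_right hZ _) _
    _ = (ENNReal.ofReal (2*π) + 1) * ENNReal.ofReal (δ ^ η) := by ring

/-- **Lemma 3.4 of the paper.** Fix `s ≥ 0` and let `μ` be a Borel
probability measure on `ℝ³` such that, for some `η > 0` and `δ₀ > 0`, and for every
`0 < δ ≤ δ₀`, the set `Z_δ` of points `z` satisfying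
`H¹({θ ∈ [0,2π) : m_π^δ(π_θ(z)) ≥ δ^s}) ≥ δ^η` has measure `μ(Z_δ) ≤ δ^η`.
Then `dim_H π_θ(spt μ) ≥ s` for almost every `θ ∈ [0, 2π)`. -/
theorem stmt11 (s : ℝ) (hs : 0 ≤ s) (μ : Measure E3) [IsProbabilityMeasure μ]
    (h : ∃ η > (0 : ℝ), ∃ δ₀ > (0 : ℝ), ∀ δ : ℝ, 0 < δ → δ ≤ δ₀ →
      μ {z : E3 |
          ENNReal.ofReal (δ ^ η) ≤
            volume {θ ∈ Set.Ico (0 : ℝ) (2 * π) |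
              ENNReal.ofReal (δ ^ s) ≤ μ {z' : E3 | ‖projθ θ z - projθ θ z'‖ ≤ δ}}}
        ≤ ENNReal.ofReal (δ ^ η)) :
    ∀ᵐ θ ∂(volume.restrict (Set.Ico (0 : ℝ) (2 * π))),
      ENNReal.ofReal s ≤ dimH (projθ θ '' sptMeasure μ) := by
  rcases eq_or_lt_of_le hs with hs0 | hs0
  · exact Filter.Eventually.of_forall fun θ => by simp [← hs0]
  obtain ⟨η, hη, δ₀, hδ₀, hZ⟩ := h
  set c : ℝ := min δ₀ 1 with hcdef
  have hc : 0 < c := lt_min hδ₀ one_pos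
  have hc1 : c ≤ 1 := min_le_right _ _
  have hcδ₀ : c ≤ δ₀ := min_le_left _ _
  set δseq : ℕ → ℝ := fun k => c * (2:ℝ)⁻¹ ^ k with hδseq
  have hδpos : ∀ k, 0 < δseq k := fun k => by positivity
  have hδle : ∀ k, δseq k ≤ δ₀ := by
    intro k
    have h1 : (2:ℝ)⁻¹ ^ k ≤ 1 := pow_le_one₀ (by norm_num) (by norm_num)
    calc c * (2:ℝ)⁻¹ ^ k ≤ c * 1 := by nlinarith
      _ ≤ δ₀ := by rw [mul_one]; exact hcδ₀
  set volR : Measure ℝ := volume.restrict (Set.Ico (0:ℝ) (2*π)) with hvolR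
  set A : ℕ → Set (ℝ × E3) := fun k => {p : ℝ × E3 |
      ENNReal.ofReal ((δseq k) ^ s) ≤
        μ {z' : E3 | ‖projθ p.1 p.2 - projθ p.1 z'‖ ≤ δseq k}} with hA
  have hkey : ∀ k : ℕ, (volR.prod μ) (A k)
      ≤ (ENNReal.ofReal (2*π) + 1) * ENNReal.ofReal ((δseq k) ^ η) :=
    fun k => prod_bound s η μ (δseq k) (hZ (δseq k) (hδpos k) (hδle k))
  -- the series is summable
  set r : ℝ≥0∞ := ENNReal.ofReal ((2:ℝ)⁻¹ ^ η) with hr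
  have hrlt : r < 1 := by
    rw [hr, ← ENNReal.ofReal_one]
    exact (ENNReal.ofReal_lt_ofReal_iff one_pos).mpr
      (Real.rpow_lt_one (by norm_num) (by norm_num) hη)
  have hterm : ∀ k : ℕ, ENNReal.ofReal ((δseq k) ^ η) ≤ r ^ k := by
    intro k
    have h1 : (δseq k) ^ η ≤ ((2:ℝ)⁻¹ ^ k) ^ η := by
      apply Real.rpow_le_rpow (hδpos k).le _ hη.le
      have h2 : (0:ℝ) < (2:ℝ)⁻¹ ^ k := by positivity
      have h4 : δseq k = c * (2:ℝ)⁻¹ ^ k := rfl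
      nlinarith
    have h3 : (((2:ℝ)⁻¹ ^ k) ^ η : ℝ) = ((2:ℝ)⁻¹ ^ η) ^ k := by
      rw [← Real.rpow_natCast ((2:ℝ)⁻¹) k, ← Real.rpow_mul (by norm_num),
        mul_comm, Real.rpow_mul (by norm_num), Real.rpow_natCast]
    rw [hr, ← ENNReal.ofReal_pow (Real.rpow_nonneg (by norm_num) _)]
    exact ENNReal.ofReal_le_ofReal (by rw [← h3]; exact h1)
  have hsum : ∑' k : ℕ, (volR.prod μ) (A k) ≠ ⊤ := by
    have hle : ∑' k : ℕ, (volR.prod μ) (A k)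
        ≤ (ENNReal.ofReal (2*π) + 1) * ∑' k : ℕ, r ^ k := by
      rw [← ENNReal.tsum_mul_left]
      exact ENNReal.tsum_le_tsum fun k =>
        le_trans (hkey k) (mul_le_mul_right (hterm k) _)
    have hgeom : ∑' k : ℕ, r ^ k = (1 - r)⁻¹ := ENNReal.tsum_geometric r
    have hfin : (ENNReal.ofReal (2*π) + 1) * ∑' k : ℕ, r ^ k ≠ ⊤ := by
      rw [hgeom]
      exact ENNReal.mul_ne_top (ENNReal.add_ne_top.mpr ⟨ENNReal.ofReal_ne_top, ENNReal.one_ne_top⟩)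
        (ENNReal.inv_ne_top.mpr (tsub_pos_of_lt hrlt).ne')
    exact ne_top_of_le_ne_top hfin hle
  have hBC : ∀ᵐ p ∂(volR.prod μ), ∀ᶠ k in Filter.atTop, p ∉ A k :=
    MeasureTheory.ae_eventually_notMem hsum
  have hae2 : ∀ᵐ θ ∂volR, ∀ᵐ z ∂μ, ∀ᶠ k in Filter.atTop, (θ, z) ∉ A k :=
    Measure.ae_ae_of_ae_prod hBC
  rw [hvolR] at hae2
  filter_upwards [hae2] with θ hθ
  apply key_theta s hs0 μ c hc θ
  filter_upwards [hθ] with z hz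
  filter_upwards [hz] with k hk
  simp only [hA, Set.mem_setOf_eq, not_le] at hk
  exact hk.le
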